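/- Inclusion of the GAP dome in the GAP sphere (equation (9)): for every x ∈ ℝ^n and every u ∈ Δ, D_gap(x,u) ⊆ B(u, √(2·gap(x,u))). Explicitly, with c = (1/2)(y + u) and r = (1/2)‖y − u‖₂: every u' ∈ ℝ^m satisfying ‖u' − c‖₂ ≤ r and ⟨y − c, u' − c⟩ ≤ gap(x,u) − r² also satisfies ‖u' − u‖₂² ≤ 2·gap(x,u). -/
import Mathlib


/-- Euclidean norm of a vector in ℝ^m. -/
noncomputable def norm2 {m : ℕ} (v : Fin m → ℝ) : ℝ := Real.sqrt (∑ i, v i ^ 2)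

/-- ℓ1 norm of a vector in ℝ^n. -/
def norm1 {n : ℕ} (x : Fin n → ℝ) : ℝ := ∑ i, |x i|

/-- Canonical inner product on ℝ^m. -/
def dot {m : ℕ} (a u : Fin m → ℝ) : ℝ := ∑ i, a i * u i

/-- Lasso primal objective P(x) = (1/2)‖y − Ax‖₂² + λ‖x‖₁. -/
noncomputable def Pobj {m n : ℕ} (A : Matrix (Fin m) (Fin n) ℝ) (y : Fin m → ℝ)
    (lam : ℝ) (x : Fin n → ℝ) : ℝ :=
  (1 / 2) * norm2 (y - A.mulVec x) ^ 2 + lam * norm1 x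

/-- Lasso dual objective D(u) = (1/2)‖y‖₂² − (1/2)‖y − u‖₂². -/
noncomputable def Dobj {m : ℕ} (y u : Fin m → ℝ) : ℝ :=
  (1 / 2) * norm2 y ^ 2 - (1 / 2) * norm2 (y - u) ^ 2

/-- Dual feasibility: u ∈ Δ iff |⟨a_i, u⟩| ≤ λ for every column a_i of A. -/
def feas {m n : ℕ} (A : Matrix (Fin m) (Fin n) ℝ) (lam : ℝ) (u : Fin m → ℝ) : Prop :=
  ∀ i : Fin n, |dot (fun j => A j i) u| ≤ lam


lemma norm2_sq {m : ℕ} (v : Fin m → ℝ) : norm2 v ^ 2 = ∑ i, v i ^ 2 := by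
  unfold norm2
  exact Real.sq_sqrt (Finset.sum_nonneg fun i _ => sq_nonneg _)

/-- equation (9): inclusion of the GAP dome in the GAP sphere:
with c = (1/2)(y + u) and r = (1/2)‖y − u‖₂, any u' with ‖u' − c‖₂ ≤ r and
⟨y − c, u' − c⟩ ≤ gap(x,u) − r² satisfies ‖u' − u‖₂² ≤ 2·gap(x,u). -/
theorem gap_dome_subset_gap_sphere (m n : ℕ) (hm : 0 < m) (hn : 0 < n)
    (A : Matrix (Fin m) (Fin n) ℝ) (y : Fin m → ℝ) (lam : ℝ) (hlam : 0 < lam)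
    (x : Fin n → ℝ) (u : Fin m → ℝ) (hu : feas A lam u)
    (c : Fin m → ℝ) (hc : c = fun i => (y i + u i) / 2)
    (r : ℝ) (hr : r = (1 / 2) * norm2 (y - u)) :
    ∀ u' : Fin m → ℝ, norm2 (u' - c) ≤ r →
      dot (y - c) (u' - c) ≤ (Pobj A y lam x - Dobj y u) - r ^ 2 →
      norm2 (u' - u) ^ 2 ≤ 2 * (Pobj A y lam x - Dobj y u) := by
  intro u' h1 h2
  have hr0 : 0 ≤ r := by
    rw [hr]; unfold norm2; positivity
  have h1' : norm2 (u' - c) ^ 2 ≤ r ^ 2 := by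
    have := norm2 (u' - c)
    exact pow_le_pow_left₀ (by unfold norm2; positivity) h1 2
  have hrsq : r ^ 2 = ∑ i, (y i - c i) ^ 2 := by
    rw [hr, mul_pow, norm2_sq]
    subst hc
    rw [Finset.mul_sum]
    apply Finset.sum_congr rfl
    intro i _
    simp only [Pi.sub_apply]
    ring
  have key : norm2 (u' - u) ^ 2 = norm2 (u' - c) ^ 2 + 2 * dot (y - c) (u' - c)
      + ∑ i, (y i - c i) ^ 2 := by
    rw [norm2_sq, norm2_sq]
    unfold dot
    rw [Finset.mul_sum, ← Finset.sum_add_distrib, ← Finset.sum_add_distrib]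
    apply Finset.sum_congr rfl
    intro i _
    subst hc
    simp only [Pi.sub_apply]
    ring
  rw [key]
  nlinarith [h1', h2, hrsq]
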